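/- arXiv:0909.4648 — 7 statements merged into one kernel-verified Lean document; each statement's English description precedes it below -/
import Mathlib

section
/- Let U, Y be Hilbert spaces, S : U → Y bounded linear, y_d ∈ Y, and C ⊆ U nonempty closed convex. For α, β > 0 let u_α and u_β be the unique minimizers over C of u ↦ ‖Su − y_d‖² + α‖u‖² and u ↦ ‖Su − y_d‖² + β‖u‖², respectively. Then ‖u_β − u_α‖ ≤ (|α − β|/β)·‖u_α‖. In particular u_α depends continuously on α > 0. -/
open scoped RealInnerProductSpace

/-- Variational inequality for a minimizer of the Tikhonov functional over a convex set. -/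
lemma tikhonov_vi
    {U Y : Type*} [NormedAddCommGroup U] [InnerProductSpace ℝ U]
    [NormedAddCommGroup Y] [InnerProductSpace ℝ Y]
    (S : U →L[ℝ] Y) (yd : Y) (C : Set U) (hconv : Convex ℝ C)
    (α : ℝ) (hα : 0 ≤ α) (u : U) (hu : u ∈ C)
    (hmin : ∀ v ∈ C, ‖S u - yd‖ ^ 2 + α * ‖u‖ ^ 2 ≤ ‖S v - yd‖ ^ 2 + α * ‖v‖ ^ 2)
    (v : U) (hv : v ∈ C) :
    0 ≤ ⟪S u - yd, S (v - u)⟫ + α * ⟪u, v - u⟫ := by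
  set w : U := v - u with hw
  set A : ℝ := ⟪S u - yd, S w⟫ + α * ⟪u, w⟫ with hA
  set B : ℝ := ‖S w‖ ^ 2 + α * ‖w‖ ^ 2 with hB
  have hB0 : 0 ≤ B := by positivity
  have key : ∀ t : ℝ, 0 < t → t ≤ 1 → 0 ≤ 2 * A + t * B := by
    intro t ht ht1
    have hmem : u + t • w ∈ C := by
      have := hconv hu hv (by linarith : (0:ℝ) ≤ 1 - t) (le_of_lt ht) (by ring)
      have heq : (1 - t) • u + t • v = u + t • w := by
        simp [hw, smul_sub, sub_smul]; abel
      rwa [heq] at this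
    have h1 := hmin _ hmem
    have e1 : S (u + t • w) - yd = (S u - yd) + t • S w := by
      simp [map_add, map_smul]; abel
    have e2 : ‖S (u + t • w) - yd‖ ^ 2
        = ‖S u - yd‖ ^ 2 + 2 * (t * ⟪S u - yd, S w⟫) + t ^ 2 * ‖S w‖ ^ 2 := by
      rw [e1, norm_add_sq_real, real_inner_smul_right, norm_smul]
      simp [Real.norm_eq_abs, abs_of_pos ht, mul_pow]
    have e3 : ‖u + t • w‖ ^ 2 = ‖u‖ ^ 2 + 2 * (t * ⟪u, w⟫) + t ^ 2 * ‖w‖ ^ 2 := by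
      rw [norm_add_sq_real, real_inner_smul_right, norm_smul]
      simp [Real.norm_eq_abs, abs_of_pos ht, mul_pow]
    rw [e2, e3] at h1
    have h2 : 0 ≤ t * (2 * A + t * B) := by rw [hA, hB]; nlinarith [h1]
    exact nonneg_of_mul_nonneg_right h2 ht
  have hA0 : 0 ≤ 2 * A := by
    refine le_of_forall_pos_le_add ?_
    intro ε hε
    have htpos : 0 < min 1 (ε / (B + 1)) := by
      apply lt_min one_pos; positivity
    have h := key _ htpos (min_le_left _ _)
    have : min 1 (ε / (B + 1)) * B ≤ ε := by
      calc min 1 (ε / (B + 1)) * B ≤ (ε / (B + 1)) * B := by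
            apply mul_le_mul_of_nonneg_right (min_le_right _ _) hB0
        _ ≤ ε := by
            rw [div_mul_eq_mul_div, div_le_iff₀ (by linarith)]
            nlinarith [hε.le]
    linarith
  linarith

/-- Continuous dependence of the Tikhonov-regularized solution on the
regularization parameter: if `u_α`, `u_β` are the minimizers over a nonempty closed
convex set `C` of `‖Su − y_d‖² + α‖u‖²` resp. `‖Su − y_d‖² + β‖u‖²` (α, β > 0), then
`‖u_β − u_α‖ ≤ (|α − β|/β)·‖u_α‖`. -/
theorem tikhonov_continuous_dependence_on_parameter
    {U Y : Type*} [NormedAddCommGroup U] [InnerProductSpace ℝ U] [CompleteSpace U]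
    [NormedAddCommGroup Y] [InnerProductSpace ℝ Y] [CompleteSpace Y]
    (S : U →L[ℝ] Y) (yd : Y) (C : Set U) (hne : C.Nonempty) (hcl : IsClosed C)
    (hconv : Convex ℝ C) (α β : ℝ) (hα : 0 < α) (hβ : 0 < β) (uα uβ : U)
    (huα : uα ∈ C ∧ ∀ v ∈ C, ‖S uα - yd‖ ^ 2 + α * ‖uα‖ ^ 2 ≤ ‖S v - yd‖ ^ 2 + α * ‖v‖ ^ 2)
    (huβ : uβ ∈ C ∧ ∀ v ∈ C, ‖S uβ - yd‖ ^ 2 + β * ‖uβ‖ ^ 2 ≤ ‖S v - yd‖ ^ 2 + β * ‖v‖ ^ 2) :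
    ‖uβ - uα‖ ≤ (|α - β| / β) * ‖uα‖ := by
  set d : U := uβ - uα with hd
  have hVIα := tikhonov_vi S yd C hconv α hα.le uα huα.1 huα.2 uβ huβ.1
  have hVIβ := tikhonov_vi S yd C hconv β hβ.le uβ huβ.1 huβ.2 uα huα.1
  -- rewrite the β-inequality in terms of d
  have e1 : S (uα - uβ) = - S d := by rw [hd]; simp [map_sub]
  have e2 : uα - uβ = -d := by rw [hd]; abel
  rw [e1, e2] at hVIβ
  have e3 : S (uβ - uα) = S d := by rw [hd]
  rw [e3] at hVIα
  -- sum of the two variational inequalities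
  have hsum : 0 ≤ -‖S d‖ ^ 2 + α * ⟪uα, d⟫ - β * ⟪uβ, d⟫ := by
    have h1 : ⟪S uα - yd, S d⟫ + ⟪S uβ - yd, -S d⟫ = -‖S d‖ ^ 2 := by
      rw [inner_neg_right, ← real_inner_self_eq_norm_sq]
      have : S uα - yd - (S uβ - yd) = -(S d) := by rw [hd]; simp [map_sub]
      rw [← sub_eq_add_neg, ← inner_sub_left, this, inner_neg_left, real_inner_self_eq_norm_sq,
        ← real_inner_self_eq_norm_sq]
    have h2 : ⟪uβ, -d⟫ = -⟪uβ, d⟫ := inner_neg_right _ _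
    rw [h2] at hVIβ
    nlinarith [hVIα, hVIβ, h1]
  have hSd : (0:ℝ) ≤ ‖S d‖ ^ 2 := by positivity
  have hkey : β * ‖d‖ ^ 2 ≤ (α - β) * ⟪uα, d⟫ := by
    have huβd : ⟪uβ, d⟫ = ⟪uα, d⟫ + ‖d‖ ^ 2 := by
      have h' : ⟪uβ, d⟫ - ⟪uα, d⟫ = ⟪d, d⟫ := by rw [← inner_sub_left, hd]
      rw [real_inner_self_eq_norm_sq] at h'; linarith
    nlinarith [hsum, hSd, huβd]
  have hbound : (α - β) * ⟪uα, d⟫ ≤ |α - β| * (‖uα‖ * ‖d‖) := by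
    calc (α - β) * ⟪uα, d⟫ ≤ |(α - β) * ⟪uα, d⟫| := le_abs_self _
      _ = |α - β| * |⟪uα, d⟫| := abs_mul _ _
      _ ≤ |α - β| * (‖uα‖ * ‖d‖) := by
          apply mul_le_mul_of_nonneg_left (abs_real_inner_le_norm _ _) (abs_nonneg _)
  rcases eq_or_lt_of_le (norm_nonneg d) with h0 | h0
  · rw [← h0]; positivity
  · have : β * ‖d‖ ≤ |α - β| * ‖uα‖ := by
      have := hkey.trans hbound
      nlinarith [h0]
    rw [div_mul_eq_mul_div, le_div_iff₀ hβ]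
    linarith [this]
end

section
/- Let U, Y be Hilbert spaces, S : U → Y bounded linear, C ⊆ U nonempty closed convex, y_d ∈ Y, and let ū ∈ C minimize ‖Su − y_d‖² over C. Assume the source condition: there exists w ∈ Y with ū = P_C(S*w). For α > 0 let u_α minimize ‖Su − y_d‖² + α‖u‖² over C. Then ‖u_α − ū‖ ≤ √α·‖w‖ + ‖Sū − y_d‖/√α. -/
/-- `p` is the metric projection of `x` onto the nonempty closed convex set `C`,
characterized by the standard variational inequality. -/
def IsProjOn {U : Type*} [NormedAddCommGroup U] [InnerProductSpace ℝ U]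
    (C : Set U) (x p : U) : Prop :=
  p ∈ C ∧ ∀ v ∈ C, inner ℝ (x - p) (v - p) ≤ (0 : ℝ)

set_option maxHeartbeats 1000000 in
/-- If `ū` minimizes `‖Su − y_d‖²` over the nonempty closed convex set `C`
and satisfies the source condition `ū = P_C(S*w)`, and `u_α` minimizes the Tikhonov
functional `‖Su − y_d‖² + α‖u‖²` over `C` for `α > 0`, then
`‖u_α − ū‖ ≤ √α‖w‖ + ‖Sū − y_d‖/√α`. -/
theorem tikhonov_error_estimate
    {U Y : Type*} [NormedAddCommGroup U] [InnerProductSpace ℝ U] [CompleteSpace U]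
    [NormedAddCommGroup Y] [InnerProductSpace ℝ Y] [CompleteSpace Y]
    (S : U →L[ℝ] Y) (yd : Y) (C : Set U) (hne : C.Nonempty) (hcl : IsClosed C)
    (hconv : Convex ℝ C) (ubar : U) (hubar : ubar ∈ C)
    (hopt : ∀ v ∈ C, ‖S ubar - yd‖ ^ 2 ≤ ‖S v - yd‖ ^ 2)
    (w : Y) (hsource : IsProjOn C (ContinuousLinearMap.adjoint S w) ubar)
    (α : ℝ) (hα : 0 < α) (uα : U) (huα : uα ∈ C)
    (huαopt : ∀ v ∈ C, ‖S uα - yd‖ ^ 2 + α * ‖uα‖ ^ 2 ≤ ‖S v - yd‖ ^ 2 + α * ‖v‖ ^ 2) :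
    ‖uα - ubar‖ ≤ Real.sqrt α * ‖w‖ + ‖S ubar - yd‖ / Real.sqrt α := by
  set e := uα - ubar with he
  set a := ‖S ubar - yd‖ with ha
  set b := ‖w‖ with hb
  have h1 := huαopt ubar hubar
  have hSe : S uα - yd = (S ubar - yd) + S e := by rw [he, map_sub]; abel
  have expand1 : ‖S uα - yd‖ ^ 2
      = ‖S ubar - yd‖ ^ 2 + 2 * (inner ℝ (S ubar - yd) (S e) : ℝ) + ‖S e‖ ^ 2 := by
    rw [hSe, @norm_add_sq_real]
  have huu : uα = ubar + e := by rw [he]; abel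
  have expand2 : ‖uα‖ ^ 2 = ‖ubar‖ ^ 2 + 2 * (inner ℝ ubar e : ℝ) + ‖e‖ ^ 2 := by
    conv_lhs => rw [huu]
    rw [@norm_add_sq_real]
  have hA : ‖S e‖ ^ 2 + α * ‖e‖ ^ 2
      ≤ -2 * (inner ℝ (S ubar - yd) (S e) : ℝ) - 2 * α * (inner ℝ ubar e : ℝ) := by
    nlinarith [h1, expand1, expand2]
  obtain ⟨-, hproj⟩ := hsource
  have hB0 := hproj uα huα
  have hB : (inner ℝ w (S e) : ℝ) ≤ (inner ℝ ubar e : ℝ) := by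
    have hadj : (inner ℝ (ContinuousLinearMap.adjoint S w) e : ℝ) = inner ℝ w (S e) :=
      ContinuousLinearMap.adjoint_inner_left S e w
    rw [show uα - ubar = e from rfl, inner_sub_left, hadj] at hB0
    linarith
  have hCS1 : -(a * ‖S e‖) ≤ (inner ℝ (S ubar - yd) (S e) : ℝ) := by
    have := abs_real_inner_le_norm (S ubar - yd) (S e)
    have := neg_abs_le (inner ℝ (S ubar - yd) (S e) : ℝ)
    linarith
  have hCS2 : -(b * ‖S e‖) ≤ (inner ℝ w (S e) : ℝ) := by
    have := abs_real_inner_le_norm w (S e)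
    have := neg_abs_le (inner ℝ w (S e) : ℝ)
    linarith
  have key : ‖S e‖ ^ 2 + α * ‖e‖ ^ 2 ≤ 2 * (a + α * b) * ‖S e‖ := by nlinarith
  have hc : α * ‖e‖ ^ 2 ≤ (a + α * b) ^ 2 := by nlinarith [sq_nonneg (‖S e‖ - (a + α * b))]
  set s := Real.sqrt α with hs
  have hspos : 0 < s := Real.sqrt_pos.mpr hα
  have hss : s * s = α := Real.mul_self_sqrt hα.le
  have hcnn : 0 ≤ a + α * b := by positivity
  have hse : s * ‖e‖ ≤ a + α * b := by nlinarith [norm_nonneg e, mul_nonneg hspos.le (norm_nonneg e)]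
  have : ‖e‖ ≤ (a + α * b) / s := (le_div_iff₀ hspos).mpr (by linarith [hse])
  calc ‖e‖ ≤ (a + α * b) / s := this
    _ = s * b + a / s := by
        rw [div_eq_iff hspos.ne', add_mul, div_mul_cancel₀ _ hspos.ne',
          mul_right_comm, hss]
        ring
end

section
/- Under the same assumptions (ū minimizes ‖Su − y_d‖² over the nonempty closed convex set C, ū = P_C(S*w) for some w ∈ Y, and u_α minimizes ‖Su − y_d‖² + α‖u‖² over C for α > 0), the residual satisfies ‖Su_α − y_d‖ ≤ 2α‖w‖ + ‖Sū − y_d‖. -/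
/-- Under the source condition `ū = P_C(S*w)` and optimality of `ū` over `C`,
the residual of the Tikhonov minimizer `u_α` over `C` satisfies
`‖Su_α − y_d‖ ≤ 2α‖w‖ + ‖Sū − y_d‖`. -/
theorem tikhonov_residual_estimate
    {U Y : Type*} [NormedAddCommGroup U] [InnerProductSpace ℝ U] [CompleteSpace U]
    [NormedAddCommGroup Y] [InnerProductSpace ℝ Y] [CompleteSpace Y]
    (S : U →L[ℝ] Y) (yd : Y) (C : Set U) (hne : C.Nonempty) (hcl : IsClosed C)
    (hconv : Convex ℝ C) (ubar : U) (hubar : ubar ∈ C)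
    (hopt : ∀ v ∈ C, ‖S ubar - yd‖ ^ 2 ≤ ‖S v - yd‖ ^ 2)
    (w : Y) (hsource : IsProjOn C (ContinuousLinearMap.adjoint S w) ubar)
    (α : ℝ) (hα : 0 < α) (uα : U) (huα : uα ∈ C)
    (huαopt : ∀ v ∈ C, ‖S uα - yd‖ ^ 2 + α * ‖uα‖ ^ 2 ≤ ‖S v - yd‖ ^ 2 + α * ‖v‖ ^ 2) :
    ‖S uα - yd‖ ≤ 2 * α * ‖w‖ + ‖S ubar - yd‖ := by
  set a := ‖S uα - yd‖ with ha
  set b := ‖S ubar - yd‖ with hb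
  have h1 := huαopt ubar hubar
  have hproj : inner ℝ (ContinuousLinearMap.adjoint S w - ubar) (uα - ubar) ≤ (0 : ℝ) :=
    hsource.2 uα huα
  have hinner : inner ℝ ubar (ubar - uα) ≤ (inner ℝ (ContinuousLinearMap.adjoint S w) (ubar - uα) : ℝ) := by
    have := hproj
    rw [inner_sub_left] at this
    have h2 : (inner ℝ (ContinuousLinearMap.adjoint S w) (uα - ubar) : ℝ) ≤ inner ℝ ubar (uα - ubar) := by
      linarith
    have e1 : (ubar - uα) = -(uα - ubar) := by abel
    rw [e1, inner_neg_right, inner_neg_right]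
    linarith
  have hadj : (inner ℝ (ContinuousLinearMap.adjoint S w) (ubar - uα) : ℝ)
      = inner ℝ w (S (ubar - uα)) := ContinuousLinearMap.adjoint_inner_left S (ubar - uα) w
  have hbound : (inner ℝ w (S (ubar - uα)) : ℝ) ≤ ‖w‖ * ‖S ubar - S uα‖ := by
    rw [map_sub]
    exact real_inner_le_norm w _
  have htri : ‖S ubar - S uα‖ ≤ a + b := by
    have : S ubar - S uα = (S ubar - yd) - (S uα - yd) := by abel
    rw [this]
    calc ‖(S ubar - yd) - (S uα - yd)‖ ≤ ‖S ubar - yd‖ + ‖S uα - yd‖ := norm_sub_le _ _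
      _ = a + b := by rw [ha, hb]; ring
  -- ‖ubar‖² - ‖uα‖² ≤ 2 ⟪ubar, ubar - uα⟫
  have hnorm : ‖ubar‖ ^ 2 - ‖uα‖ ^ 2 ≤ 2 * inner ℝ ubar (ubar - uα) := by
    have h := norm_sub_sq_real ubar (ubar - uα)
    have e : ubar - (ubar - uα) = uα := by abel
    rw [e] at h
    nlinarith [sq_nonneg ‖ubar - uα‖]
  have hkey : a ^ 2 ≤ b ^ 2 + 2 * α * ‖w‖ * (a + b) := by
    have hw : (inner ℝ ubar (ubar - uα) : ℝ) ≤ ‖w‖ * (a + b) := by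
      calc (inner ℝ ubar (ubar - uα) : ℝ) ≤ inner ℝ (ContinuousLinearMap.adjoint S w) (ubar - uα) := hinner
        _ = inner ℝ w (S (ubar - uα)) := hadj
        _ ≤ ‖w‖ * ‖S ubar - S uα‖ := hbound
        _ ≤ ‖w‖ * (a + b) := by
            exact mul_le_mul_of_nonneg_left htri (norm_nonneg w)
    nlinarith [hα.le]
  nlinarith [norm_nonneg (S uα - yd), norm_nonneg (S ubar - yd), norm_nonneg w,
    mul_nonneg (mul_nonneg hα.le (norm_nonneg w)) (norm_nonneg (S uα - yd)),
    mul_nonneg hα.le (norm_nonneg w)]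
end

section
/- Under the source condition ū = P_C(S*w) and optimality of ū over C, the following combined inequality holds for the Tikhonov minimizer u_α over C: ‖Su_α − y_d + αw‖² + α‖u_α − ū‖² ≤ ‖Sū − y_d + αw‖². -/
/-- Under the source condition `ū = P_C(S*w)` and optimality of `ū` over `C`,
the Tikhonov minimizer `u_α` over `C` satisfies the combined inequality
`‖Su_α − y_d + αw‖² + α‖u_α − ū‖² ≤ ‖Sū − y_d + αw‖²`. -/
theorem tikhonov_combined_inequality
    {U Y : Type*} [NormedAddCommGroup U] [InnerProductSpace ℝ U] [CompleteSpace U]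
    [NormedAddCommGroup Y] [InnerProductSpace ℝ Y] [CompleteSpace Y]
    (S : U →L[ℝ] Y) (yd : Y) (C : Set U) (hne : C.Nonempty) (hcl : IsClosed C)
    (hconv : Convex ℝ C) (ubar : U) (hubar : ubar ∈ C)
    (hopt : ∀ v ∈ C, ‖S ubar - yd‖ ^ 2 ≤ ‖S v - yd‖ ^ 2)
    (w : Y) (hsource : IsProjOn C (ContinuousLinearMap.adjoint S w) ubar)
    (α : ℝ) (hα : 0 < α) (uα : U) (huα : uα ∈ C)
    (huαopt : ∀ v ∈ C, ‖S uα - yd‖ ^ 2 + α * ‖uα‖ ^ 2 ≤ ‖S v - yd‖ ^ 2 + α * ‖v‖ ^ 2) :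
    ‖S uα - yd + α • w‖ ^ 2 + α * ‖uα - ubar‖ ^ 2 ≤ ‖S ubar - yd + α • w‖ ^ 2 := by
  have h1 := huαopt ubar hubar
  have h2 := hsource.2 uα huα
  have hexp : ∀ u : U, ‖S u - yd + α • w‖ ^ 2
      = ‖S u - yd‖ ^ 2 + 2 * (α * inner ℝ (S u - yd) w) + α ^ 2 * ‖w‖ ^ 2 := by
    intro u
    rw [norm_add_sq_real, real_inner_smul_right, norm_smul, Real.norm_eq_abs,
      abs_of_pos hα, mul_pow]
  rw [hexp uα, hexp ubar]
  have hnsq : ‖uα - ubar‖ ^ 2 = ‖uα‖ ^ 2 - 2 * inner ℝ uα ubar + ‖ubar‖ ^ 2 :=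
    norm_sub_sq_real uα ubar
  have h2' : (inner ℝ (ContinuousLinearMap.adjoint S w) uα : ℝ)
      - inner ℝ (ContinuousLinearMap.adjoint S w) ubar
      - inner ℝ ubar uα + ‖ubar‖ ^ 2 ≤ 0 := by
    have := h2
    rw [inner_sub_left, inner_sub_right, inner_sub_right,
      real_inner_self_eq_norm_sq] at this
    linarith
  have hadj : ∀ u : U, (inner ℝ (ContinuousLinearMap.adjoint S w) u : ℝ)
      = inner ℝ (S u - yd) w + inner ℝ yd w := by
    intro u
    rw [ContinuousLinearMap.adjoint_inner_left, inner_sub_left, real_inner_comm]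
    ring
  rw [hadj uα, hadj ubar] at h2'
  rw [hnsq]
  nlinarith [h2', h1, hα, real_inner_comm uα ubar]
end

section
/- Let U, Y be Hilbert spaces, S : U → Y bounded linear, C ⊆ U nonempty closed convex, ū ∈ C with Sū = y_d and ū = P_C(S*w) for some w ∈ Y. For δ > 0 let y^δ ∈ Y with ‖y^δ − y_d‖ ≤ δ, and let u_α^δ minimize ‖Su − y^δ‖² + α‖u‖² over C (α > 0). Then ‖u_α^δ − ū‖ ≤ √α‖w‖ + δ/√α and ‖Su_α^δ − y_d‖ ≤ 2α‖w‖ + δ. -/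
lemma aux_nonneg (A B : ℝ) (hB : 0 ≤ B)
    (h : ∀ t : ℝ, 0 < t → t ≤ 1 → 0 ≤ A * t + B * t ^ 2) : 0 ≤ A := by
  by_contra hA
  push_neg at hA
  rcases eq_or_lt_of_le hB with hB0 | hB0
  · have := h 1 one_pos le_rfl
    nlinarith
  · have ht0 : 0 < min 1 (-A / (2 * B)) := lt_min one_pos (div_pos (by linarith) (by linarith))
    have ht1 : min 1 (-A / (2 * B)) ≤ 1 := min_le_left _ _
    have htb : min 1 (-A / (2 * B)) ≤ -A / (2 * B) := min_le_right _ _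
    have hkey := h _ ht0 ht1
    have hBt : B * min 1 (-A / (2 * B)) ≤ -A / 2 := by
      calc B * min 1 (-A / (2 * B)) ≤ B * (-A / (2 * B)) := by nlinarith
        _ = -A / 2 := by field_simp
    nlinarith

lemma expand_sq {E : Type*} [NormedAddCommGroup E] [InnerProductSpace ℝ E]
    (x y : E) (t : ℝ) :
    ‖x + t • y‖ ^ 2 = ‖x‖ ^ 2 + 2 * t * inner ℝ x y + t ^ 2 * ‖y‖ ^ 2 := by
  rw [norm_add_sq_real, real_inner_smul_right, norm_smul, mul_pow, Real.norm_eq_abs, sq_abs]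
  ring

/-- Noisy-data Tikhonov error estimates: if `ū ∈ C` satisfies `Sū = y_d`
and the source condition `ū = P_C(S*w)`, `‖y^δ − y_d‖ ≤ δ`, and `u_α^δ` minimizes
`‖Su − y^δ‖² + α‖u‖²` over `C` for `α > 0`, then `‖u_α^δ − ū‖ ≤ √α‖w‖ + δ/√α` and
`‖Su_α^δ − y_d‖ ≤ 2α‖w‖ + δ`. -/
theorem tikhonov_noisy_error_estimates
    {U Y : Type*} [NormedAddCommGroup U] [InnerProductSpace ℝ U] [CompleteSpace U]
    [NormedAddCommGroup Y] [InnerProductSpace ℝ Y] [CompleteSpace Y]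
    (S : U →L[ℝ] Y) (yd : Y) (C : Set U) (hne : C.Nonempty) (hcl : IsClosed C)
    (hconv : Convex ℝ C) (ubar : U) (hubar : ubar ∈ C) (hattain : S ubar = yd)
    (w : Y) (hsource : IsProjOn C (ContinuousLinearMap.adjoint S w) ubar)
    (δ : ℝ) (hδ : 0 < δ) (yδ : Y) (hnoise : ‖yδ - yd‖ ≤ δ)
    (α : ℝ) (hα : 0 < α) (uαδ : U) (huαδ : uαδ ∈ C)
    (hopt : ∀ v ∈ C, ‖S uαδ - yδ‖ ^ 2 + α * ‖uαδ‖ ^ 2 ≤ ‖S v - yδ‖ ^ 2 + α * ‖v‖ ^ 2) :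
    ‖uαδ - ubar‖ ≤ Real.sqrt α * ‖w‖ + δ / Real.sqrt α ∧
      ‖S uαδ - yd‖ ≤ 2 * α * ‖w‖ + δ := by
  obtain ⟨-, hVIsrc⟩ := hsource
  -- Variational inequality of the Tikhonov minimizer at `ubar`
  have hA : 0 ≤ (inner ℝ (S uαδ - yδ) (S ubar - S uαδ) : ℝ)
      + α * (inner ℝ uαδ (ubar - uαδ) : ℝ) := by
    have := aux_nonneg
      (2 * ((inner ℝ (S uαδ - yδ) (S ubar - S uαδ) : ℝ)
        + α * (inner ℝ uαδ (ubar - uαδ) : ℝ)))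
      (‖S ubar - S uαδ‖ ^ 2 + α * ‖ubar - uαδ‖ ^ 2)
      (by positivity) ?_
    · linarith
    intro t ht0 ht1
    have hmem : uαδ + t • (ubar - uαδ) ∈ C := by
      have h2 := hconv huαδ hubar (by linarith : (0:ℝ) ≤ 1 - t) ht0.le (by ring)
      have : (1 - t) • uαδ + t • ubar = uαδ + t • (ubar - uαδ) := by module
      rwa [this] at h2
    have hop := hopt _ hmem
    have hS : S (uαδ + t • (ubar - uαδ)) - yδ
        = (S uαδ - yδ) + t • (S ubar - S uαδ) := by
      rw [map_add, map_smul, map_sub]; abel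
    rw [hS, expand_sq, expand_sq] at hop
    nlinarith [hop]
  -- rewrite the two inner products
  have hid1 : (inner ℝ (S uαδ - yδ) (S ubar - S uαδ) : ℝ)
      = -‖S uαδ - yd‖ ^ 2 + (inner ℝ (yδ - yd) (S uαδ - yd) : ℝ) := by
    have h1 : S uαδ - yδ = (S uαδ - yd) - (yδ - yd) := by abel
    have h2 : S ubar - S uαδ = -(S uαδ - yd) := by rw [hattain]; abel
    rw [h1, h2, inner_neg_right, inner_sub_left, real_inner_self_eq_norm_sq]
    ring
  have hid2 : (inner ℝ uαδ (ubar - uαδ) : ℝ)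
      = -‖uαδ - ubar‖ ^ 2 - (inner ℝ ubar (uαδ - ubar) : ℝ) := by
    have h2 : ubar - uαδ = -(uαδ - ubar) := by abel
    rw [h2, inner_neg_right]
    have h3 : (inner ℝ uαδ (uαδ - ubar) : ℝ)
        = ‖uαδ - ubar‖ ^ 2 + (inner ℝ ubar (uαδ - ubar) : ℝ) := by
      have h4 := inner_add_left (𝕜 := ℝ) (uαδ - ubar) ubar (uαδ - ubar)
      rw [sub_add_cancel] at h4
      rw [h4, real_inner_self_eq_norm_sq]
    rw [h3]; ring
  -- source condition
  have hsrc : (inner ℝ w (S uαδ - yd) : ℝ) ≤ (inner ℝ ubar (uαδ - ubar) : ℝ) := by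
    have h := hVIsrc uαδ huαδ
    rw [inner_sub_left] at h
    have h2 : (inner ℝ (ContinuousLinearMap.adjoint S w) (uαδ - ubar) : ℝ)
        = (inner ℝ w (S uαδ - yd) : ℝ) := by
      rw [ContinuousLinearMap.adjoint_inner_left, map_sub, hattain]
    linarith
  -- Cauchy–Schwarz bounds
  have hcs1 : (inner ℝ (yδ - yd) (S uαδ - yd) : ℝ) ≤ δ * ‖S uαδ - yd‖ := by
    have := real_inner_le_norm (yδ - yd) (S uαδ - yd)
    nlinarith [norm_nonneg (S uαδ - yd)]
  have hcs2 : -(‖w‖ * ‖S uαδ - yd‖) ≤ (inner ℝ w (S uαδ - yd) : ℝ) := by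
    have := abs_real_inner_le_norm w (S uαδ - yd)
    cases' abs_le.mp this with h _
    linarith
  -- key inequality
  have hkey : ‖S uαδ - yd‖ ^ 2 + α * ‖uαδ - ubar‖ ^ 2
      ≤ (δ + α * ‖w‖) * ‖S uαδ - yd‖ := by
    rw [hid1, hid2] at hA
    nlinarith [mul_le_mul_of_nonneg_left hsrc hα.le,
      mul_le_mul_of_nonneg_left hcs2 hα.le]
  have hE : (0:ℝ) ≤ ‖S uαδ - yd‖ := norm_nonneg _
  have hD : (0:ℝ) ≤ ‖uαδ - ubar‖ := norm_nonneg _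
  have hW : (0:ℝ) ≤ ‖w‖ := norm_nonneg _
  constructor
  · -- first bound
    have hs : 0 < Real.sqrt α := Real.sqrt_pos.mpr hα
    have hss : Real.sqrt α * Real.sqrt α = α := Real.mul_self_sqrt hα.le
    have hDs : ‖uαδ - ubar‖ * Real.sqrt α ≤ α * ‖w‖ + δ := by
      nlinarith [sq_nonneg (2 * ‖S uαδ - yd‖ - (δ + α * ‖w‖)),
        mul_nonneg hD hs.le, mul_nonneg hα.le hW]
    have : Real.sqrt α * ‖w‖ + δ / Real.sqrt α = (α * ‖w‖ + δ) / Real.sqrt α := by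
      field_simp
      nlinarith [hss]
    rw [this, le_div_iff₀ hs]
    exact hDs
  · -- second bound
    nlinarith [mul_nonneg hα.le (sq_nonneg ‖uαδ - ubar‖), mul_nonneg hα.le hW,
      sq_nonneg ‖uαδ - ubar‖]
end

section
/- Converse source-condition result: Let u_α denote the Tikhonov minimizer over the closed convex set U_ad of ‖Su − y_d‖² + α‖u‖². Assume u_α ⇀ ū weakly in U as α → 0 and ‖Su_α − y_d‖ = O(α). Assume furthermore that weak convergence y_n ⇀ y in Y implies S*y_n → S*y strongly in U. Then there exists w ∈ Y such that ū = P_{U_ad}(S*w). -/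
open Filter Topology

lemma IsProjOn.dist_le {U : Type*} [NormedAddCommGroup U] [InnerProductSpace ℝ U]
    {C : Set U} {x₁ x₂ p₁ p₂ : U} (h₁ : IsProjOn C x₁ p₁) (h₂ : IsProjOn C x₂ p₂) :
    ‖p₁ - p₂‖ ≤ ‖x₁ - x₂‖ := by
  have A := h₁.2 p₂ h₂.1
  have B := h₂.2 p₁ h₁.1
  have key : (inner ℝ (p₁ - p₂) (p₁ - p₂) : ℝ) ≤ inner ℝ (x₁ - x₂) (p₁ - p₂) := by
    have e1 : (inner ℝ (x₁ - x₂) (p₁ - p₂) : ℝ) - inner ℝ (p₁ - p₂) (p₁ - p₂)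
        = inner ℝ (x₁ - p₁) (p₁ - p₂) - (inner ℝ (x₂ - p₂) (p₁ - p₂) : ℝ) := by
      simp only [inner_sub_left, inner_sub_right]
      ring
    have e2 : (inner ℝ (x₁ - p₁) (p₁ - p₂) : ℝ) = - inner ℝ (x₁ - p₁) (p₂ - p₁) := by
      rw [← inner_neg_right]; congr 1; abel
    linarith [A, B, e1, e2.ge]
  have hnorm : ‖p₁ - p₂‖ ^ 2 ≤ ‖x₁ - x₂‖ * ‖p₁ - p₂‖ := by
    calc ‖p₁ - p₂‖ ^ 2 = inner ℝ (p₁ - p₂) (p₁ - p₂) := (real_inner_self_eq_norm_sq _).symm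
    _ ≤ inner ℝ (x₁ - x₂) (p₁ - p₂) := key
    _ ≤ ‖x₁ - x₂‖ * ‖p₁ - p₂‖ := real_inner_le_norm _ _
  rcases (norm_nonneg (p₁ - p₂)).eq_or_lt with h0 | h0
  · exact h0 ▸ norm_nonneg _
  · have := le_of_mul_le_mul_right (by nlinarith : ‖p₁ - p₂‖ * ‖p₁ - p₂‖ ≤ ‖x₁ - x₂‖ * ‖p₁ - p₂‖) h0
    exact this

lemma tikhonov_isProjOn {U Y : Type*}
    [NormedAddCommGroup U] [InnerProductSpace ℝ U] [CompleteSpace U]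
    [NormedAddCommGroup Y] [InnerProductSpace ℝ Y] [CompleteSpace Y]
    (S : U →L[ℝ] Y) (yd : Y) (Uad : Set U) (hconv : Convex ℝ Uad)
    {a : ℝ} (ha : 0 < a) {ua : U} (hmem : ua ∈ Uad)
    (hopt : ∀ v ∈ Uad, ‖S ua - yd‖ ^ 2 + a * ‖ua‖ ^ 2 ≤ ‖S v - yd‖ ^ 2 + a * ‖v‖ ^ 2) :
    IsProjOn Uad (ContinuousLinearMap.adjoint S (-a⁻¹ • (S ua - yd))) ua := by
  refine ⟨hmem, fun v hv => ?_⟩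
  set d := v - ua with hd
  set A : ℝ := inner ℝ (S ua - yd) (S d) + a * inner ℝ ua d with hA
  set B : ℝ := ‖S d‖ ^ 2 + a * ‖d‖ ^ 2 with hB
  have hBnn : 0 ≤ B := by positivity
  have ht : ∀ t : ℝ, 0 < t → t ≤ 1 → 0 ≤ A + (t / 2) * B := by
    intro t ht0 ht1
    have hvt : ua + t • d ∈ Uad := by
      have h := hconv hmem hv (by linarith : (0:ℝ) ≤ 1 - t) ht0.le (by ring)
      convert h using 1
      module
    have h1 := hopt _ hvt
    have e1 : S (ua + t • d) - yd = (S ua - yd) + t • (S d) := by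
      simp [map_add, map_smul]; abel
    rw [e1, norm_add_sq_real, norm_add_sq_real, real_inner_smul_right,
      real_inner_smul_right, norm_smul, norm_smul, Real.norm_eq_abs,
      abs_of_pos ht0] at h1
    have h2 : 0 ≤ 2 * t * (A + (t / 2) * B) := by
      rw [hA, hB]; nlinarith [h1]
    nlinarith [h2, ht0]
  have hAnn : 0 ≤ A := by
    have hseq : Tendsto (fun n : ℕ => A + ((1 / ((n : ℝ) + 1)) / 2) * B) atTop (𝓝 A) := by
      have h0 := tendsto_one_div_add_atTop_nhds_zero_nat (𝕜 := ℝ)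
      have h1 : Tendsto (fun n : ℕ => A + ((1 / ((n : ℝ) + 1)) / 2) * B) atTop
          (𝓝 (A + (0 / 2) * B)) :=
        tendsto_const_nhds.add ((h0.div_const 2).mul_const B)
      simpa using h1
    refine ge_of_tendsto' hseq fun n => ht _ (by positivity) ?_
    rw [div_le_one (by positivity)]
    linarith [Nat.cast_nonneg (α := ℝ) n]
  have e : (inner ℝ (ContinuousLinearMap.adjoint S (-a⁻¹ • (S ua - yd)) - ua) d : ℝ)
      = -a⁻¹ * A := by
    rw [map_smul, hA]
    simp only [inner_sub_left, real_inner_smul_left, ContinuousLinearMap.adjoint_inner_left]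
    field_simp
    ring
  rw [e]
  have : 0 < a⁻¹ := inv_pos.mpr ha
  nlinarith

lemma exists_weak_subseq {Y : Type*} [NormedAddCommGroup Y] [InnerProductSpace ℝ Y]
    [CompleteSpace Y] (w : ℕ → Y) (cb : ℝ) (hb : ∀ n, ‖w n‖ ≤ cb) :
    ∃ (φ : ℕ → ℕ) (wl : Y), StrictMono φ ∧
      ∀ z : Y, Tendsto (fun k => (inner ℝ (w (φ k)) z : ℝ)) atTop (𝓝 (inner ℝ wl z : ℝ)) := by
  have cb0 : 0 ≤ cb := le_trans (norm_nonneg (w 0)) (hb 0)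
  -- diagonal extraction via compactness of a product of intervals
  set F : ℕ → (ℕ → ℝ) := fun k m => inner ℝ (w k) (w m) with hF
  set s : Set (ℕ → ℝ) := Set.pi Set.univ fun m => Set.Icc (-(cb * ‖w m‖)) (cb * ‖w m‖) with hs
  have hFs : ∀ k, F k ∈ s := by
    intro k m _
    have h1 : |(inner ℝ (w k) (w m) : ℝ)| ≤ cb * ‖w m‖ :=
      le_trans (abs_real_inner_le_norm _ _)
        (mul_le_mul_of_nonneg_right (hb k) (norm_nonneg _))
    exact abs_le.mp h1
  have hcomp : IsCompact s := isCompact_univ_pi fun m => isCompact_Icc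
  obtain ⟨g, -, φ, hφ, hconv⟩ := hcomp.tendsto_subseq hFs
  have hptwise : ∀ m, Tendsto (fun k => (inner ℝ (w (φ k)) (w m) : ℝ)) atTop (𝓝 (g m)) :=
    fun m => tendsto_pi_nhds.mp hconv m
  -- the set of good test vectors
  set P : Y → Prop := fun z => ∃ L, Tendsto (fun k => (inner ℝ (w (φ k)) z : ℝ)) atTop (𝓝 L)
    with hP
  have hbound : ∀ (z z' : Y) (k : ℕ),
      dist (inner ℝ (w (φ k)) z : ℝ) (inner ℝ (w (φ k)) z' : ℝ) ≤ cb * ‖z - z'‖ := by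
    intro z z' k
    rw [Real.dist_eq, ← inner_sub_right]
    exact le_trans (abs_real_inner_le_norm _ _)
      (mul_le_mul_of_nonneg_right (hb _) (norm_nonneg _))
  have hspan : ∀ z ∈ Submodule.span ℝ (Set.range w), P z := by
    intro z hz
    refine Submodule.span_induction (fun x hx => ?_) ⟨0, by simp⟩
      (fun x y _ _ ⟨L₁, h₁⟩ ⟨L₂, h₂⟩ => ⟨L₁ + L₂, by simpa [inner_add_right] using h₁.add h₂⟩)
      (fun r x _ ⟨L, h⟩ => ⟨r * L, by simpa [real_inner_smul_right] using h.const_mul r⟩) hz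
    obtain ⟨m, rfl⟩ := hx
    exact ⟨g m, hptwise m⟩
  have hclosure : ∀ z ∈ closure ((Submodule.span ℝ (Set.range w)) : Set Y), P z := by
    intro z hz
    have hC : CauchySeq (fun k => (inner ℝ (w (φ k)) z : ℝ)) := by
      refine Metric.cauchySeq_iff.mpr fun ε hε => ?_
      have hεd : 0 < ε / (3 * (cb + 1)) := by positivity
      obtain ⟨z', hz', hdz⟩ := Metric.mem_closure_iff.mp hz _ hεd
      obtain ⟨L, hL⟩ := hspan z' hz'
      obtain ⟨N, hN⟩ := Metric.cauchySeq_iff.mp hL.cauchySeq (ε / 3) (by positivity)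
      have hnear : ∀ k, dist (inner ℝ (w (φ k)) z : ℝ) (inner ℝ (w (φ k)) z' : ℝ) < ε / 3 := by
        intro k
        refine lt_of_le_of_lt (hbound z z' k) ?_
        have h2 : cb * ‖z - z'‖ ≤ cb * (ε / (3 * (cb + 1))) := by
          rw [← dist_eq_norm] at *
          exact mul_le_mul_of_nonneg_left hdz.le cb0
        refine lt_of_le_of_lt h2 ?_
        have h3 : cb * (ε / (3 * (cb + 1))) = (cb * ε) / (3 * (cb + 1)) := by ring
        rw [h3, div_lt_div_iff₀ (by positivity) (by norm_num : (0:ℝ) < 3)]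
        nlinarith
      refine ⟨N, fun m hm n hn => ?_⟩
      calc dist (inner ℝ (w (φ m)) z : ℝ) (inner ℝ (w (φ n)) z : ℝ)
          ≤ dist (inner ℝ (w (φ m)) z : ℝ) (inner ℝ (w (φ m)) z' : ℝ)
            + dist (inner ℝ (w (φ m)) z' : ℝ) (inner ℝ (w (φ n)) z' : ℝ)
            + dist (inner ℝ (w (φ n)) z' : ℝ) (inner ℝ (w (φ n)) z : ℝ) := dist_triangle4 _ _ _ _
        _ < ε / 3 + ε / 3 + ε / 3 := by
            refine add_lt_add (add_lt_add (hnear m) (hN m hm n hn)) ?_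
            rw [dist_comm]; exact hnear n
        _ = ε := by ring
    exact cauchySeq_tendsto_of_complete hC
  have hPall : ∀ z : Y, P z := by
    intro z
    set K := (Submodule.span ℝ (Set.range w)).topologicalClosure with hK
    haveI : CompleteSpace K := (Submodule.isClosed_topologicalClosure _).completeSpace_coe
    set p : Y := (K.orthogonalProjectionOnto z : Y) with hp
    have hzp : z - p ∈ Kᗮ := K.sub_starProjection_mem_orthogonal z
    have hwK : ∀ n, w n ∈ K := fun n =>
      Submodule.le_topologicalClosure _ (Submodule.subset_span (Set.mem_range_self n))
    have hinner : ∀ k, (inner ℝ (w (φ k)) z : ℝ) = inner ℝ (w (φ k)) p := by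
      intro k
      have h0 : (inner ℝ (w (φ k)) (z - p) : ℝ) = 0 :=
        Submodule.inner_right_of_mem_orthogonal (hwK _) hzp
      rw [inner_sub_right] at h0
      linarith
    have hpK : p ∈ closure ((Submodule.span ℝ (Set.range w)) : Set Y) := by
      rw [← Submodule.topologicalClosure_coe]
      exact (K.orthogonalProjectionOnto z).2
    obtain ⟨L, hL⟩ := hclosure p hpK
    exact ⟨L, by simpa only [hinner] using hL⟩
  -- build the weak limit via Riesz representation
  choose flim hflim using hPall
  have habs : ∀ z, ‖flim z‖ ≤ cb * ‖z‖ := by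
    intro z
    rw [Real.norm_eq_abs]
    refine le_of_tendsto (hflim z).abs (Eventually.of_forall fun k => ?_)
    exact le_trans (abs_real_inner_le_norm _ _)
      (mul_le_mul_of_nonneg_right (hb _) (norm_nonneg _))
  set f : Y →ₗ[ℝ] ℝ :=
    { toFun := flim
      map_add' := fun x y => tendsto_nhds_unique (hflim (x + y))
        (by simpa [inner_add_right] using (hflim x).add (hflim y))
      map_smul' := fun r x => tendsto_nhds_unique (hflim (r • x))
        (by simpa [real_inner_smul_right] using (hflim x).const_mul r) } with hf
  set fc : Y →L[ℝ] ℝ := f.mkContinuous cb habs with hfc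
  refine ⟨φ, (InnerProductSpace.toDual ℝ Y).symm fc, hφ, fun z => ?_⟩
  have : (inner ℝ ((InnerProductSpace.toDual ℝ Y).symm fc) z : ℝ) = flim z :=
    InnerProductSpace.toDual_symm_apply
  rw [this]
  exact hflim z

/-- Converse source-condition result. Let `u_α` be the Tikhonov minimizer
over the nonempty closed convex set `U_ad` of `‖Su − y_d‖² + α‖u‖²`. If `u_α ⇀ ū` weakly
as `α → 0`, `‖Su_α − y_d‖ = O(α)`, and `S*` maps weakly convergent sequences in `Y` to
strongly convergent sequences in `U`, then there exists `w ∈ Y` with `ū = P_{U_ad}(S*w)`. -/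
theorem converse_source_condition
    {U Y : Type*} [NormedAddCommGroup U] [InnerProductSpace ℝ U] [CompleteSpace U]
    [NormedAddCommGroup Y] [InnerProductSpace ℝ Y] [CompleteSpace Y]
    (S : U →L[ℝ] Y) (yd : Y) (Uad : Set U) (hne : Uad.Nonempty)
    (hcl : IsClosed Uad) (hconv : Convex ℝ Uad)
    (u : ℝ → U) (humem : ∀ a > (0 : ℝ), u a ∈ Uad)
    (hopt : ∀ a > (0 : ℝ), ∀ v ∈ Uad,
      ‖S (u a) - yd‖ ^ 2 + a * ‖u a‖ ^ 2 ≤ ‖S v - yd‖ ^ 2 + a * ‖v‖ ^ 2)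
    (ubar : U)
    (hweak : ∀ z : U, Tendsto (fun a => (inner ℝ (u a) z : ℝ)) (𝓝[>] 0)
      (𝓝 (inner ℝ ubar z : ℝ)))
    (c : ℝ) (hrate : ∀ᶠ a in 𝓝[>] (0 : ℝ), ‖S (u a) - yd‖ ≤ c * a)
    (hSstar : ∀ (y : ℕ → Y) (ylim : Y),
      (∀ z : Y, Tendsto (fun n => (inner ℝ (y n) z : ℝ)) atTop (𝓝 (inner ℝ ylim z : ℝ))) →
      Tendsto (fun n => ContinuousLinearMap.adjoint S (y n)) atTop
        (𝓝 (ContinuousLinearMap.adjoint S ylim))) :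
    ∃ w : Y, IsProjOn Uad (ContinuousLinearMap.adjoint S w) ubar := by
  rw [eventually_nhdsWithin_iff] at hrate
  obtain ⟨ε, hε, hrate'⟩ := Metric.eventually_nhds_iff.mp hrate
  set a : ℕ → ℝ := fun n => min (ε / 2) (1 / ((n : ℝ) + 1)) with ha
  have hapos : ∀ n, 0 < a n := fun n => lt_min (by positivity) (by positivity)
  have haeps : ∀ n, dist (a n) 0 < ε := by
    intro n
    rw [Real.dist_eq, sub_zero, abs_of_pos (hapos n)]
    exact lt_of_le_of_lt (min_le_left _ _) (by linarith)
  have hatend : Tendsto a atTop (𝓝 0) :=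
    squeeze_zero (fun n => (hapos n).le) (fun n => min_le_right _ _)
      tendsto_one_div_add_atTop_nhds_zero_nat
  have hatend' : Tendsto a atTop (𝓝[>] 0) :=
    tendsto_nhdsWithin_of_tendsto_nhds_of_eventually_within a hatend
      (Eventually.of_forall fun n => hapos n)
  have hrate2 : ∀ n, ‖S (u (a n)) - yd‖ ≤ c * a n := fun n =>
    hrate' (haeps n) (hapos n)
  set cb : ℝ := max c 0 with hcb
  set w : ℕ → Y := fun n => -(a n)⁻¹ • (S (u (a n)) - yd) with hw
  have hwb : ∀ n, ‖w n‖ ≤ cb := by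
    intro n
    rw [hw]
    simp only [norm_smul, Real.norm_eq_abs, abs_neg, abs_of_pos (inv_pos.mpr (hapos n))]
    calc (a n)⁻¹ * ‖S (u (a n)) - yd‖
        ≤ (a n)⁻¹ * (c * a n) :=
          mul_le_mul_of_nonneg_left (hrate2 n) (inv_pos.mpr (hapos n)).le
      _ = c := by field_simp [(hapos n).ne']
      _ ≤ cb := le_max_left _ _
  have hproj : ∀ n, IsProjOn Uad (ContinuousLinearMap.adjoint S (w n)) (u (a n)) :=
    fun n => tikhonov_isProjOn S yd Uad hconv (hapos n) (humem _ (hapos n))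
      (fun v hv => hopt _ (hapos n) v hv)
  obtain ⟨φ, wl, hφ, hweakw⟩ := exists_weak_subseq w cb hwb
  have hstrong : Tendsto (fun k => ContinuousLinearMap.adjoint S (w (φ k))) atTop
      (𝓝 (ContinuousLinearMap.adjoint S wl)) := hSstar (w ∘ φ) wl hweakw
  have hCu : CauchySeq (fun k => u (a (φ k))) := by
    have hCx : CauchySeq (fun k => ContinuousLinearMap.adjoint S (w (φ k))) :=
      hstrong.cauchySeq
    rw [Metric.cauchySeq_iff] at hCx ⊢
    intro ε' hε'
    obtain ⟨N, hN⟩ := hCx ε' hε'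
    refine ⟨N, fun m hm n hn => ?_⟩
    have hle : dist (u (a (φ m))) (u (a (φ n))) ≤
        dist (ContinuousLinearMap.adjoint S (w (φ m)))
          (ContinuousLinearMap.adjoint S (w (φ n))) := by
      rw [dist_eq_norm, dist_eq_norm]
      exact (hproj (φ m)).dist_le (hproj (φ n))
    exact lt_of_le_of_lt hle (hN m hm n hn)
  obtain ⟨p, hp⟩ := cauchySeq_tendsto_of_complete hCu
  have hpUad : p ∈ Uad :=
    hcl.mem_of_tendsto hp (Eventually.of_forall fun k => humem _ (hapos _))
  have hup : ubar = p := by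
    refine ext_inner_right ℝ fun z => ?_
    have h1 : Tendsto (fun k => (inner ℝ (u (a (φ k))) z : ℝ)) atTop
        (𝓝 (inner ℝ ubar z : ℝ)) :=
      ((hweak z).comp hatend').comp hφ.tendsto_atTop
    have h2 : Tendsto (fun k => (inner ℝ (u (a (φ k))) z : ℝ)) atTop
        (𝓝 (inner ℝ p z : ℝ)) :=
      hp.inner tendsto_const_nhds
    exact tendsto_nhds_unique h1 h2
  refine ⟨wl, ?_⟩
  rw [hup]
  refine ⟨hpUad, fun v hv => ?_⟩
  have hterm : ∀ k, (inner ℝ (ContinuousLinearMap.adjoint S (w (φ k)) - u (a (φ k)))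
      (v - u (a (φ k))) : ℝ) ≤ 0 := fun k => (hproj (φ k)).2 v hv
  have hlim : Tendsto (fun k => (inner ℝ (ContinuousLinearMap.adjoint S (w (φ k)) - u (a (φ k)))
        (v - u (a (φ k))) : ℝ)) atTop
      (𝓝 (inner ℝ (ContinuousLinearMap.adjoint S wl - p) (v - p) : ℝ)) :=
    (hstrong.sub hp).inner (tendsto_const_nhds.sub hp)
  exact le_of_tendsto hlim (Eventually.of_forall hterm)
end

section
/- Total error estimate for joint Tikhonov–Lavrentiev regularization: under the assumptions that ū solves the constrained problem with all constraints strictly inactive (τ < ū < b − τ, Sū < ψ − τ), the source condition ū = S*w holds, and S satisfies the regularity implications (L² → L^∞ on D' for S, weak-Y → L^∞ on D for S*), for λ small enough the solution u_α^λ of the jointly regularized problem satisfies ‖ū − u_α^λ‖ = O(√α) as α → 0. -/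
open MeasureTheory Filter Topology
open scoped ENNReal NNReal

set_option maxHeartbeats 1000000 in
/-- Total error estimate for joint Tikhonov–Lavrentiev regularization.
Under strictly inactive constraints at `ū` (margin `τ`), the source condition
`ū = S*w`, and the regularity implications for `S` and `S*`, for every small enough
Lavrentiev parameter `λ > 0` the solutions `u_α^λ` of the jointly regularized problems
over `U_ad^λ = {0 ≤ u ≤ b, λu + Su ≤ ψ}` satisfy `‖ū − u_α^λ‖ = O(√α)` as `α → 0`. -/
theorem joint_tikhonov_lavrentiev_total_error
    {α' : Type*} [MeasurableSpace α'] (μ : Measure α') (D' : Set α')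
    (S : Lp ℝ 2 μ →L[ℝ] Lp ℝ 2 μ) (hdense : DenseRange S)
    (b ψ : α' → ℝ) (yd : Lp ℝ 2 μ)
    (Uad : ℝ → Set (Lp ℝ 2 μ))
    (hUad : ∀ lam : ℝ, Uad lam = {u : Lp ℝ 2 μ | (∀ᵐ x ∂μ, 0 ≤ u x ∧ u x ≤ b x) ∧
      ∀ᵐ x ∂μ, x ∈ D' → lam * u x + S u x ≤ ψ x})
    (ubar : Lp ℝ 2 μ) (hmem : ubar ∈ Uad 0)
    (hopt : ∀ v ∈ Uad 0, ‖S ubar - yd‖ ^ 2 ≤ ‖S v - yd‖ ^ 2)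
    (τ : ℝ) (hτ : 0 < τ)
    (hstrict_u : ∀ᵐ x ∂μ, τ < ubar x ∧ ubar x < b x - τ)
    (hstrict_S : ∀ᵐ x ∂μ, x ∈ D' → S ubar x < ψ x - τ)
    (w : Lp ℝ 2 μ) (hsource : ubar = ContinuousLinearMap.adjoint S w)
    (hS : ∀ (u : ℕ → Lp ℝ 2 μ) (ulim : Lp ℝ 2 μ), Tendsto u atTop (𝓝 ulim) →
      Tendsto (fun n => eLpNormEssSup (D'.indicator (fun x => S (u n) x - S ulim x)) μ)
        atTop (𝓝 0))
    (hSstar : ∀ (y : ℕ → Lp ℝ 2 μ) (ylim : Lp ℝ 2 μ),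
      (∀ z : Lp ℝ 2 μ, Tendsto (fun n => (inner ℝ (y n) z : ℝ)) atTop (𝓝 (inner ℝ ylim z : ℝ))) →
      Tendsto (fun n => eLpNormEssSup
          (fun x => ContinuousLinearMap.adjoint S (y n) x -
            ContinuousLinearMap.adjoint S ylim x) μ)
        atTop (𝓝 0)) :
    ∃ lam₀ > (0 : ℝ), ∀ lam : ℝ, 0 < lam → lam < lam₀ →
      ∃ C > (0 : ℝ), ∃ α₀ > (0 : ℝ), ∀ a : ℝ, 0 < a → a < α₀ →
        ∀ ua : Lp ℝ 2 μ, ua ∈ Uad lam →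
          (∀ v ∈ Uad lam, ‖S ua - yd‖ ^ 2 + a * ‖ua‖ ^ 2 ≤ ‖S v - yd‖ ^ 2 + a * ‖v‖ ^ 2) →
          ‖ubar - ua‖ ≤ C * Real.sqrt a := by
  classical
  have hAw : ContinuousLinearMap.adjoint S w = ubar := hsource.symm
  -- Step 1: `ubar` is essentially bounded, via `hSstar`.
  have hMfin : eLpNormEssSup (fun x => ubar x) μ ≠ ⊤ := by
    intro hM
    have hinner : ∀ z : Lp ℝ 2 μ,
        Tendsto (fun n : ℕ => (inner ℝ ((((n : ℝ) + 1))⁻¹ • w) z : ℝ)) atTop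
          (𝓝 (inner ℝ (0 : Lp ℝ 2 μ) z : ℝ)) := by
      intro z
      simp only [real_inner_smul_left, inner_zero_left]
      have h1 : Tendsto (fun n : ℕ => ((n : ℝ) + 1)⁻¹) atTop (𝓝 0) := by
        simpa [one_div] using tendsto_one_div_add_atTop_nhds_zero_nat (𝕜 := ℝ)
      simpa using h1.mul_const (inner ℝ w z : ℝ)
    have htt := hSstar (fun n : ℕ => (((n : ℝ) + 1))⁻¹ • w) 0 hinner
    have heq : ∀ n : ℕ,
        eLpNormEssSup
          (fun x => ContinuousLinearMap.adjoint S ((((n : ℝ) + 1))⁻¹ • w) x -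
            ContinuousLinearMap.adjoint S (0 : Lp ℝ 2 μ) x) μ
          = (‖(((n : ℝ) + 1))⁻¹‖₊ : ℝ≥0∞) * eLpNormEssSup (fun x => ubar x) μ := by
      intro n
      have h1 : ⇑(ContinuousLinearMap.adjoint S ((((n : ℝ) + 1))⁻¹ • w))
          =ᵐ[μ] fun x => (((n : ℝ) + 1))⁻¹ • ubar x := by
        rw [_root_.map_smul, hAw]
        exact Lp.coeFn_smul _ _
      have h2 : ⇑(ContinuousLinearMap.adjoint S (0 : Lp ℝ 2 μ)) =ᵐ[μ] fun _ => (0 : ℝ) := by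
        rw [_root_.map_zero]
        exact Lp.coeFn_zero _ _ _
      have h3 : (fun x => ContinuousLinearMap.adjoint S ((((n : ℝ) + 1))⁻¹ • w) x -
            ContinuousLinearMap.adjoint S (0 : Lp ℝ 2 μ) x)
          =ᵐ[μ] ((((n : ℝ) + 1))⁻¹ • fun x => ubar x) := by
        filter_upwards [h1, h2] with x hx hy
        simp only [hx, hy, Pi.smul_apply, sub_zero]
      rw [eLpNormEssSup_congr_ae h3, eLpNormEssSup_const_smul, enorm_eq_nnnorm]
    have hlt : ∀ᶠ n : ℕ in atTop,
        eLpNormEssSup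
          (fun x => ContinuousLinearMap.adjoint S ((((n : ℝ) + 1))⁻¹ • w) x -
            ContinuousLinearMap.adjoint S (0 : Lp ℝ 2 μ) x) μ < 1 :=
      htt.eventually (Filter.Tendsto.eventually_lt_const (by norm_num) tendsto_id)
    obtain ⟨n, hn⟩ := hlt.exists
    rw [heq n, hM, ENNReal.mul_top] at hn
    · exact absurd hn (by simp)
    · simp only [ne_eq, ENNReal.coe_eq_zero, nnnorm_eq_zero, inv_eq_zero]
      positivity
  set B : ℝ := (eLpNormEssSup (fun x => ubar x) μ).toReal with hBdef
  have hB0 : 0 ≤ B := ENNReal.toReal_nonneg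
  have hub : ∀ᵐ x ∂μ, |ubar x| ≤ B := by
    filter_upwards [ae_le_eLpNormEssSup (f := fun x => ubar x) (μ := μ)] with x hx
    have := ENNReal.toReal_mono hMfin hx
    simpa [Real.norm_eq_abs] using this
  refine ⟨τ / (B + 1), by positivity, fun lam hlam hlamlt => ?_⟩
  refine ⟨‖w‖ + 1, by positivity, 1, one_pos, fun a ha _ ua hua hopt' => ?_⟩
  have hmem0 := hmem
  rw [hUad 0] at hmem0
  rw [hUad lam] at hua
  -- `ua ∈ Uad 0`
  have hua0c : ∀ᵐ x ∂μ, x ∈ D' → 0 * ua x + S ua x ≤ ψ x := by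
    filter_upwards [hua.2, hua.1] with x h2 h1 hx
    have h3 := h2 hx
    nlinarith [h1.1]
  have hua0 : ua ∈ Uad 0 := by
    rw [hUad 0]
    exact ⟨hua.1, hua0c⟩
  -- `ubar ∈ Uad lam`
  have hubarlam : ubar ∈ Uad lam := by
    rw [hUad lam]
    refine ⟨hmem0.1, ?_⟩
    filter_upwards [hstrict_S, hstrict_u, hub] with x hS1 hu1 hb1 hx
    have h3 := hS1 hx
    have h4 : ubar x ≤ B := le_trans (le_abs_self _) hb1
    have h5 : lam * (B + 1) < τ := by
      have h := (lt_div_iff₀ (by positivity : (0:ℝ) < B + 1)).mp hlamlt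
      linarith
    nlinarith [hu1.1]
  -- notation
  set c : Lp ℝ 2 μ := S ubar - yd with hc
  set d : Lp ℝ 2 μ := S ua - S ubar with hd
  -- variational inequality at ubar
  have hmid : ∀ t : ℝ, 0 < t → t ≤ 1 →
      0 ≤ 2 * (inner ℝ c d : ℝ) + t * ‖d‖ ^ 2 := by
    intro t ht0 ht1
    have hv : ubar + t • (ua - ubar) ∈ Uad 0 := by
      rw [hUad 0]
      have hcoe : ⇑(ubar + t • (ua - ubar)) =ᵐ[μ] fun x => ubar x + t * (ua x - ubar x) := by
        filter_upwards [Lp.coeFn_add ubar (t • (ua - ubar)), Lp.coeFn_smul t (ua - ubar),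
          Lp.coeFn_sub ua ubar] with x h1 h2 h3
        simp only [h1, h2, h3, Pi.add_apply, Pi.smul_apply, Pi.sub_apply, smul_eq_mul]
      have hScoe : ⇑(S (ubar + t • (ua - ubar)))
          =ᵐ[μ] fun x => S ubar x + t * (S ua x - S ubar x) := by
        have : S (ubar + t • (ua - ubar)) = S ubar + t • (S ua - S ubar) := by
          rw [_root_.map_add, _root_.map_smul, _root_.map_sub]
        rw [this]
        filter_upwards [Lp.coeFn_add (S ubar) (t • (S ua - S ubar)),
          Lp.coeFn_smul t (S ua - S ubar), Lp.coeFn_sub (S ua) (S ubar)] with x h1 h2 h3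
        simp only [h1, h2, h3, Pi.add_apply, Pi.smul_apply, Pi.sub_apply, smul_eq_mul]
      constructor
      · filter_upwards [hcoe, hmem0.1, hua.1] with x h1 h2 h3
        rw [h1]
        constructor
        · nlinarith [h2.1, h3.1]
        · nlinarith [h2.2, h3.2]
      · filter_upwards [hScoe, hmem0.2, (by rw [hUad 0] at hua0; exact hua0.2 :
            ∀ᵐ x ∂μ, x ∈ D' → 0 * ua x + S ua x ≤ ψ x)] with x h1 h2 h3 hx
        rw [h1]
        have h2' := h2 hx
        have h3' := h3 hx
        nlinarith
    have hineq := hopt _ hv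
    have hexp : S (ubar + t • (ua - ubar)) - yd = c + t • d := by
      rw [_root_.map_add, _root_.map_smul, _root_.map_sub, hc, hd]
      module
    rw [hexp, norm_add_sq_real, real_inner_smul_right, norm_smul, mul_pow,
      Real.norm_eq_abs, abs_of_pos ht0] at hineq
    have ht' : 0 ≤ 2 * (inner ℝ c d : ℝ) * t + t ^ 2 * ‖d‖ ^ 2 := by nlinarith
    have := le_of_mul_le_mul_left
      (by nlinarith : t * 0 ≤ t * (2 * (inner ℝ c d : ℝ) + t * ‖d‖ ^ 2)) ht0
    linarith
  have hVI : 0 ≤ (inner ℝ c d : ℝ) := by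
    have hseq : ∀ n : ℕ, 0 ≤ 2 * (inner ℝ c d : ℝ) + ((n : ℝ) + 1)⁻¹ * ‖d‖ ^ 2 := by
      intro n
      refine hmid _ (by positivity) ?_
      rw [inv_le_one_iff₀]
      right; push_cast; linarith [Nat.cast_nonneg (α := ℝ) n]
    have hlim : Tendsto (fun n : ℕ => 2 * (inner ℝ c d : ℝ) + ((n : ℝ) + 1)⁻¹ * ‖d‖ ^ 2)
        atTop (𝓝 (2 * (inner ℝ c d : ℝ) + 0 * ‖d‖ ^ 2)) := by
      refine tendsto_const_nhds.add (Tendsto.mul_const _ ?_)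
      simpa [one_div] using tendsto_one_div_add_atTop_nhds_zero_nat (𝕜 := ℝ)
    have := ge_of_tendsto' hlim hseq
    simp only [zero_mul, add_zero] at this
    linarith
  -- main estimate
  have h1 := hopt' ubar hubarlam
  have hd2 : S ua - yd = c + d := by rw [hc, hd]; abel
  have h2 : ‖S ua - yd‖ ^ 2 = ‖c‖ ^ 2 + 2 * (inner ℝ c d : ℝ) + ‖d‖ ^ 2 := by
    rw [hd2, norm_add_sq_real]
  have h4 : ‖ubar - ua‖ ^ 2 = ‖ubar‖ ^ 2 - 2 * (inner ℝ ubar ua : ℝ) + ‖ua‖ ^ 2 :=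
    norm_sub_sq_real ubar ua
  have h5 : ‖ubar‖ ^ 2 - (inner ℝ ubar ua : ℝ) = -(inner ℝ w d : ℝ) := by
    have e1 : (inner ℝ ubar (ubar - ua) : ℝ) = (inner ℝ w (S (ubar - ua)) : ℝ) := by
      rw [← ContinuousLinearMap.adjoint_inner_left S (ubar - ua) w, hAw]
    have e2 : S (ubar - ua) = -d := by rw [_root_.map_sub, hd]; abel
    rw [e2, inner_neg_right] at e1
    rw [← e1, inner_sub_right, real_inner_self_eq_norm_sq]
  have h6 : -(inner ℝ w d : ℝ) ≤ ‖w‖ * ‖d‖ := by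
    have := abs_real_inner_le_norm w d
    cases abs_le.mp this with
    | intro hl hr => linarith
  have e1 : a * ‖ua‖ ^ 2 + ‖d‖ ^ 2 ≤ a * ‖ubar‖ ^ 2 := by
    have hcnorm : ‖S ubar - yd‖ = ‖c‖ := by rw [hc]
    rw [hcnorm] at h1
    linarith [h1, h2, hVI]
  have h4a : a * ‖ubar - ua‖ ^ 2
      = a * ‖ubar‖ ^ 2 - 2 * a * (inner ℝ ubar ua : ℝ) + a * ‖ua‖ ^ 2 := by
    rw [h4]; ring
  have e2a : a * ‖ubar‖ ^ 2 - a * (inner ℝ ubar ua : ℝ) = -(a * (inner ℝ w d : ℝ)) := by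
    linear_combination a * h5
  have e3 : a * ‖ubar - ua‖ ^ 2 ≤ -2 * (a * (inner ℝ w d : ℝ)) - ‖d‖ ^ 2 := by
    nlinarith [e1, h4a, e2a]
  have e4 : -2 * (a * (inner ℝ w d : ℝ)) ≤ 2 * a * (‖w‖ * ‖d‖) := by nlinarith [ha.le, h6]
  have e5 : a * ‖ubar - ua‖ ^ 2 ≤ a * (a * ‖w‖ ^ 2) := by
    nlinarith [sq_nonneg (‖d‖ - a * ‖w‖)]
  have e6 : ‖ubar - ua‖ ^ 2 ≤ a * ‖w‖ ^ 2 := le_of_mul_le_mul_left e5 ha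
  -- conclude
  have e7 : ‖ubar - ua‖ ^ 2 ≤ (‖w‖ + 1) ^ 2 * a := by nlinarith [e6, ha.le, norm_nonneg w, mul_nonneg ha.le (norm_nonneg w)]
  have := Real.sqrt_le_sqrt e7
  rw [Real.sqrt_sq (norm_nonneg _)] at this
  calc ‖ubar - ua‖ ≤ Real.sqrt ((‖w‖ + 1) ^ 2 * a) := this
    _ = (‖w‖ + 1) * Real.sqrt a := by
        rw [Real.sqrt_mul (sq_nonneg _), Real.sqrt_sq (by positivity)]
end
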